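/- On the set H^v of functions u ∈ L^1([0,T]; B) that are absolutely continuous with u(0)=0, Bochner-integrable derivative, take values in the common domain B_0 of G_v, and satisfy G_v u ∈ L^1([0,T]; B), the generator of the semigroup U_s^v u(t) = T_v(s)u(t−s)1_{[s≤t]} coincides with −∂_t + G_v, i.e. H^v is contained in the domain of the generator and the generator restricted to H^v equals u ↦ −u′ + G_v u. -/

import Mathlib

open MeasureTheory Filter

/-- The killed left-translation operator `Γ_s`. -/
noncomputable def killedShift {B : Type*} [NormedAddCommGroup B] (s : ℝ) (u : ℝ → B) : ℝ → B :=
  fun t => if s ≤ t then u (t - s) else 0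

/-- Continuity of translation in `L¹(ℝ; B)`. -/
theorem l1_translation_tendsto {B : Type*} [NormedAddCommGroup B] [NormedSpace ℝ B]
    (g : ℝ → B) (hg : Integrable g volume) :
    Tendsto (fun r : ℝ => ∫ t, ‖g t - g (t - r)‖) (nhds 0) (nhds 0) := by
  rw [Metric.tendsto_nhds]
  intro ε hε
  obtain ⟨k, hksupp, hkapprox, hkcont, hkint⟩ :=
    hg.exists_hasCompactSupport_integral_sub_le (show (0:ℝ) < ε/4 by linarith)
  obtain ⟨C, hC⟩ := hksupp.exists_bound_of_continuous hkcont
  obtain ⟨R, hR⟩ := hksupp.isBounded.subset_closedBall 0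
  have hmid : Tendsto (fun r : ℝ => ∫ t, ‖k t - k (t - r)‖) (nhds 0) (nhds 0) := by
    have := tendsto_integral_filter_of_dominated_convergence
      (μ := (volume : Measure ℝ)) (l := nhds (0:ℝ))
      (F := fun r t => ‖k t - k (t - r)‖) (f := fun _ => (0:ℝ))
      (Set.indicator (Set.Icc (-R-1) (R+1)) (fun _ => 2 * C))
      ?meas ?bnd ?bint ?lim
    · simpa using this
    case meas =>
      filter_upwards with r
      exact ((hkcont.sub (hkcont.comp (continuous_id.sub continuous_const))).norm).aestronglyMeasurable
    case bnd =>
      have h1 : ∀ᶠ r : ℝ in nhds 0, |r| ≤ 1 := by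
        filter_upwards [Metric.ball_mem_nhds (0:ℝ) one_pos] with r hr
        rw [Metric.mem_ball, Real.dist_eq, sub_zero] at hr
        exact hr.le
      filter_upwards [h1] with r hr
      filter_upwards with t
      rw [Real.norm_of_nonneg (norm_nonneg _)]
      by_cases ht : t ∈ Set.Icc (-R-1) (R+1)
      · rw [Set.indicator_of_mem ht]
        calc ‖k t - k (t - r)‖ ≤ ‖k t‖ + ‖k (t - r)‖ := norm_sub_le _ _
        _ ≤ C + C := add_le_add (hC t) (hC _)
        _ = 2 * C := by ring
      · rw [Set.indicator_of_notMem ht]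
        have hrr := abs_le.1 hr
        have ht' : t < -R-1 ∨ R+1 < t := by
          rw [Set.mem_Icc, not_and_or] at ht
          rcases ht with h | h
          · left; linarith [not_le.1 h]
          · right; linarith [not_le.1 h]
        have hk1 : k t = 0 := by
          apply image_eq_zero_of_notMem_tsupport
          intro hmem
          have h2 := hR hmem
          rw [Real.closedBall_eq_Icc] at h2
          obtain ⟨h3, h4⟩ := Set.mem_Icc.1 h2
          rcases ht' with h | h <;> linarith
        have hk2 : k (t - r) = 0 := by
          apply image_eq_zero_of_notMem_tsupport
          intro hmem
          have h2 := hR hmem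
          rw [Real.closedBall_eq_Icc] at h2
          obtain ⟨h3, h4⟩ := Set.mem_Icc.1 h2
          rcases ht' with h | h <;> linarith
        simp [hk1, hk2]
    case bint =>
      refine (integrable_indicator_iff measurableSet_Icc).2 ?_
      exact integrableOn_const measure_Icc_lt_top.ne
    case lim =>
      filter_upwards with t
      have h1 : Tendsto (fun r : ℝ => k (t - r)) (nhds 0) (nhds (k (t - 0))) :=
        (hkcont.comp (continuous_const.sub continuous_id)).tendsto 0
      rw [sub_zero] at h1
      have := (tendsto_const_nhds (x := k t) (f := nhds (0:ℝ))).sub h1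
      rw [sub_self] at this
      simpa using this.norm
  have hmid' : ∀ᶠ r : ℝ in nhds 0, (∫ t, ‖k t - k (t - r)‖) < ε/2 := by
    have := Metric.tendsto_nhds.1 hmid (ε/2) (by linarith)
    filter_upwards [this] with r hr
    rw [Real.dist_eq, sub_zero] at hr
    exact lt_of_abs_lt hr
  filter_upwards [hmid'] with r hr
  rw [Real.dist_eq, sub_zero, abs_of_nonneg (integral_nonneg fun t => norm_nonneg _)]
  have hgk : Integrable (fun t => g t - k t) volume := hg.sub hkint
  have int1 : Integrable (fun t => ‖g t - k t‖) volume := hgk.norm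
  have int2 : Integrable (fun t => ‖g (t - r) - k (t - r)‖) volume := (hgk.comp_sub_right r).norm
  have int3 : Integrable (fun t => ‖k t - k (t - r)‖) volume :=
    (hkint.sub (hkint.comp_sub_right r)).norm
  have int13 : Integrable (fun t => ‖g t - k t‖ + ‖k t - k (t - r)‖) volume := int1.add int3
  have hptwise : (fun t => ‖g t - g (t - r)‖) ≤ᵐ[volume]
      fun t => ‖g t - k t‖ + ‖k t - k (t - r)‖ + ‖g (t - r) - k (t - r)‖ := by
    filter_upwards with t
    have h4 := dist_triangle4 (g t) (k t) (k (t - r)) (g (t - r))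
    simp only [dist_eq_norm] at h4
    calc ‖g t - g (t - r)‖ ≤ ‖g t - k t‖ + ‖k t - k (t - r)‖ + ‖k (t - r) - g (t - r)‖ := h4
      _ = ‖g t - k t‖ + ‖k t - k (t - r)‖ + ‖g (t - r) - k (t - r)‖ := by
          rw [norm_sub_rev (k (t - r))]
  have key : (∫ t, ‖g t - g (t - r)‖)
      ≤ (∫ t, ‖g t - k t‖) + (∫ t, ‖k t - k (t - r)‖) + ∫ t, ‖g t - k t‖ := by
    calc (∫ t, ‖g t - g (t - r)‖)
        ≤ ∫ t, (‖g t - k t‖ + ‖k t - k (t - r)‖ + ‖g (t - r) - k (t - r)‖) :=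
          integral_mono_of_nonneg (Eventually.of_forall fun t => norm_nonneg _)
            (int13.add int2) hptwise
      _ = (∫ t, ‖g t - k t‖) + (∫ t, ‖k t - k (t - r)‖) + ∫ t, ‖g (t - r) - k (t - r)‖ := by
          rw [integral_add int13 int2, integral_add int1 int3]
      _ = (∫ t, ‖g t - k t‖) + (∫ t, ‖k t - k (t - r)‖) + ∫ t, ‖g t - k t‖ := by
          rw [integral_sub_right_eq_self (fun t => ‖g t - k t‖) r]
  linarith [hkapprox]

theorem Tv_hasDerivAt {B : Type*} [NormedAddCommGroup B] [NormedSpace ℝ B]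
    (Tv : ℝ → B →L[ℝ] B) (G : B → B)
    (hTvadd : ∀ s t : ℝ, Tv (s + t) = (Tv s).comp (Tv t))
    (hTvcontr : ∀ (s : ℝ) (x : B), ‖Tv s x‖ ≤ ‖x‖)
    (hTvcont : ∀ x : B, Continuous fun s : ℝ => Tv s x)
    (x : B)
    (hx : Tendsto (fun h : ℝ => h⁻¹ • (Tv h x - x)) (nhdsWithin 0 (Set.Ioi 0)) (nhds (G x)))
    (s : ℝ) : HasDerivAt (fun r => Tv r x) (Tv s (G x)) s := by
  rw [hasDerivAt_iff_tendsto_slope, ← nhdsLT_sup_nhdsGT, tendsto_sup]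
  constructor
  · -- from the left
    have hmap : Tendsto (fun t : ℝ => s - t) (nhdsWithin s (Set.Iio s))
        (nhdsWithin 0 (Set.Ioi 0)) := by
      apply tendsto_nhdsWithin_of_tendsto_nhds_of_eventually_within
      · have : Tendsto (fun t : ℝ => s - t) (nhds s) (nhds (s - s)) :=
          (continuous_const.sub continuous_id).tendsto s
        rw [sub_self] at this
        exact this.mono_left nhdsWithin_le_nhds
      · filter_upwards [self_mem_nhdsWithin] with t ht
        exact Set.mem_Ioi.2 (sub_pos.2 ht)
    have hD : Tendsto (fun t : ℝ => (s - t)⁻¹ • (Tv (s - t) x - x))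
        (nhdsWithin s (Set.Iio s)) (nhds (G x)) := hx.comp hmap
    have h1 : Tendsto (fun t : ℝ => Tv t ((s - t)⁻¹ • (Tv (s - t) x - x) - G x))
        (nhdsWithin s (Set.Iio s)) (nhds 0) := by
      apply squeeze_zero_norm (fun t => hTvcontr t _)
      exact (tendsto_iff_norm_sub_tendsto_zero.1 hD)
    have h2 : Tendsto (fun t : ℝ => Tv t (G x)) (nhdsWithin s (Set.Iio s))
        (nhds (Tv s (G x))) :=
      ((hTvcont (G x)).tendsto s).mono_left nhdsWithin_le_nhds
    have h3 := h1.add h2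
    rw [zero_add] at h3
    apply h3.congr
    intro t
    have e1 : Tv s x = Tv t (Tv (s - t) x) := by
      rw [← ContinuousLinearMap.comp_apply, ← hTvadd]
      norm_num
    rw [slope_def_module, map_sub (Tv t), sub_add_cancel, e1, ← map_sub (Tv t), ← ContinuousLinearMap.map_smul]
    congr 1
    rw [show s - t = -(t - s) by ring, inv_neg, neg_smul, ← smul_neg, neg_sub]
  · -- from the right
    have hmap : Tendsto (fun t : ℝ => t - s) (nhdsWithin s (Set.Ioi s))
        (nhdsWithin 0 (Set.Ioi 0)) := by
      apply tendsto_nhdsWithin_of_tendsto_nhds_of_eventually_within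
      · have : Tendsto (fun t : ℝ => t - s) (nhds s) (nhds (s - s)) :=
          (continuous_id.sub continuous_const).tendsto s
        rw [sub_self] at this
        exact this.mono_left nhdsWithin_le_nhds
      · filter_upwards [self_mem_nhdsWithin] with t ht
        exact Set.mem_Ioi.2 (sub_pos.2 ht)
    have hD : Tendsto (fun t : ℝ => Tv s ((t - s)⁻¹ • (Tv (t - s) x - x)))
        (nhdsWithin s (Set.Ioi s)) (nhds (Tv s (G x))) :=
      ((Tv s).continuous.tendsto (G x)).comp (hx.comp hmap)
    apply hD.congr
    intro t
    have e1 : Tv t x = Tv s (Tv (t - s) x) := by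
      rw [← ContinuousLinearMap.comp_apply, ← hTvadd]
      norm_num
    rw [slope_def_module, e1, ← map_sub (Tv s), ← ContinuousLinearMap.map_smul]

theorem Tv_norm_sub_le {B : Type*} [NormedAddCommGroup B] [NormedSpace ℝ B]
    (Tv : ℝ → B →L[ℝ] B) (G : B → B)
    (hTv0 : Tv 0 = ContinuousLinearMap.id ℝ B)
    (hTvadd : ∀ s t : ℝ, Tv (s + t) = (Tv s).comp (Tv t))
    (hTvcontr : ∀ (s : ℝ) (x : B), ‖Tv s x‖ ≤ ‖x‖)
    (hTvcont : ∀ x : B, Continuous fun s : ℝ => Tv s x)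
    (x : B)
    (hx : Tendsto (fun h : ℝ => h⁻¹ • (Tv h x - x)) (nhdsWithin 0 (Set.Ioi 0)) (nhds (G x)))
    (h : ℝ) (hh : 0 ≤ h) : ‖Tv h x - x‖ ≤ h * ‖G x‖ := by
  have hderiv : ∀ t ∈ Set.Icc (0:ℝ) h, HasDerivWithinAt (fun r => Tv r x) (Tv t (G x))
      (Set.Icc 0 h) t := fun t _ =>
    (Tv_hasDerivAt Tv G hTvadd hTvcontr hTvcont x hx t).hasDerivWithinAt
  have hbound : ∀ t ∈ Set.Icc (0:ℝ) h, ‖Tv t (G x)‖ ≤ ‖G x‖ := fun t _ => hTvcontr t (G x)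
  have := Convex.norm_image_sub_le_of_norm_hasDerivWithin_le hderiv hbound (convex_Icc 0 h)
    (Set.left_mem_Icc.2 hh) (Set.right_mem_Icc.2 hh)
  rw [sub_zero, Real.norm_of_nonneg hh] at this
  calc ‖Tv h x - x‖ = ‖Tv h x - Tv 0 x‖ := by rw [hTv0]; rfl
    _ ≤ ‖G x‖ * h := this
    _ = h * ‖G x‖ := mul_comm _ _

theorem qmp_sub_prod (s : Set ℝ) :
    Measure.QuasiMeasurePreserving (fun p : ℝ × ℝ => p.1 - p.2)
      ((volume : Measure ℝ).prod ((volume : Measure ℝ).restrict s)) volume := by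
  refine ⟨measurable_fst.sub measurable_snd, ?_⟩
  refine Measure.AbsolutelyContinuous.mk fun N hN hNzero => ?_
  rw [Measure.map_apply (f := fun p : ℝ × ℝ => p.1 - p.2) (measurable_fst.sub measurable_snd) hN]
  rw [Measure.prod_apply (s := (fun p : ℝ × ℝ => p.1 - p.2) ⁻¹' N) ((measurable_fst.sub measurable_snd) hN)]
  have hz : ∀ t : ℝ, ((volume : Measure ℝ).restrict s)
      (Prod.mk t ⁻¹' ((fun p : ℝ × ℝ => p.1 - p.2) ⁻¹' N)) = 0 := by
    intro t
    refine le_antisymm ?_ zero_le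
    have hpre : (Prod.mk t ⁻¹' ((fun p : ℝ × ℝ => p.1 - p.2) ⁻¹' N))
        = (fun r : ℝ => t - r) ⁻¹' N := rfl
    rw [hpre]
    calc ((volume : Measure ℝ).restrict s) ((fun r : ℝ => t - r) ⁻¹' N)
        ≤ volume ((fun r : ℝ => t - r) ⁻¹' N) := Measure.restrict_le_self _
      _ = volume N := (Measure.measurePreserving_sub_left volume t).measure_preimage
          hN.nullMeasurableSet
      _ = 0 := hNzero
  simp [hz]

/-- On the set `H^v` of functions `u ∈ L¹([0,T]; B)` that are absolutely continuous with
`u(0) = 0` and Bochner-integrable derivative `u'`, take values in the domain `B₀` of the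
generator `G_v` of the strongly continuous contraction group `(T_v(t))_{t ∈ ℝ}`, and satisfy
`G_v u ∈ L¹([0,T]; B)`, the generator of the semigroup `U_s^v u(t) = T_v(s) u(t-s) 1_{[s≤t]}`
coincides with `-∂_t + G_v`: the difference quotients converge in `L¹([0,T]; B)` to
`-u' + G_v u`. -/
theorem generator_of_composed_semigroup_on_H
    {B : Type*} [NormedAddCommGroup B] [NormedSpace ℝ B] [CompleteSpace B]
    (Tv : ℝ → B →L[ℝ] B) (G : B → B) (B0 : Set B)
    (hTv0 : Tv 0 = ContinuousLinearMap.id ℝ B)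
    (hTvadd : ∀ s t : ℝ, Tv (s + t) = (Tv s).comp (Tv t))
    (hTvcontr : ∀ (s : ℝ) (x : B), ‖Tv s x‖ ≤ ‖x‖)
    (hTvcont : ∀ x : B, Continuous fun s : ℝ => Tv s x)
    (hgen : ∀ x ∈ B0,
      Tendsto (fun h : ℝ => h⁻¹ • (Tv h x - x)) (nhdsWithin 0 (Set.Ioi 0)) (nhds (G x)))
    (T : ℝ) (hT : 0 < T)
    (u u' : ℝ → B)
    (huint : IntegrableOn u (Set.Icc 0 T) volume)
    (hu'int : IntegrableOn u' (Set.Icc 0 T) volume)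
    (hu0 : u 0 = 0)
    (hurepr : ∀ t ∈ Set.Icc (0:ℝ) T, u t = ∫ s in (0:ℝ)..t, u' s)
    (huB0 : ∀ t : ℝ, u t ∈ B0)
    (hGuint : IntegrableOn (fun t => G (u t)) (Set.Icc 0 T) volume) :
    Tendsto (fun h : ℝ =>
        ∫ t in Set.Icc (0:ℝ) T,
          ‖h⁻¹ • (Tv h (killedShift h u t) - u t) - (-u' t + G (u t))‖)
      (nhdsWithin 0 (Set.Ioi 0)) (nhds 0) := by
  classical
  -- the extended derivative and its primitive
  set g : ℝ → B := (Set.Icc (0:ℝ) T).indicator u' with hgdef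
  have hg : Integrable g volume := (integrable_indicator_iff measurableSet_Icc).2 hu'int
  have hgi : ∀ a b : ℝ, IntervalIntegrable g volume a b := fun a b => hg.intervalIntegrable
  set w : ℝ → B := fun t => ∫ s in (0:ℝ)..t, g s with hwdef
  have hwcont : Continuous w := intervalIntegral.continuous_primitive hgi 0
  have hgu' : ∀ t ∈ Set.Icc (0:ℝ) T, g t = u' t := fun t ht => Set.indicator_of_mem ht u'
  have huw : ∀ t ∈ Set.Icc (0:ℝ) T, u t = w t := by
    intro t ht
    rw [hurepr t ht]
    simp only [hwdef]
    refine (intervalIntegral.integral_congr fun s hs => ?_).symm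
    rw [Set.uIcc_of_le ht.1] at hs
    exact hgu' s ⟨hs.1, le_trans hs.2 ht.2⟩
  have hw0 : ∀ t : ℝ, t ≤ 0 → w t = 0 := by
    intro t ht
    simp only [hwdef]
    rw [intervalIntegral.integral_of_ge ht, neg_eq_zero]
    have h0 : ∀ᵐ s ∂(volume : Measure ℝ), s ≠ (0:ℝ) := by
      rw [ae_iff]
      simp only [ne_eq, not_not, Set.setOf_eq_eq_singleton]
      exact measure_singleton 0
    have hae : g =ᵐ[volume.restrict (Set.Ioc t 0)] (fun _ => (0:B)) := by
      filter_upwards [ae_restrict_of_ae h0, ae_restrict_mem measurableSet_Ioc] with s hs1 hs2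
      have hs3 : s < 0 := lt_of_le_of_ne hs2.2 hs1
      have : s ∉ Set.Icc (0:ℝ) T := fun hmem => absurd hmem.1 (not_le.2 hs3)
      simp only [hgdef]
      exact Set.indicator_of_notMem this u'
    rw [integral_congr_ae hae, integral_zero]
  -- killed shift identity
  have hK : ∀ h : ℝ, 0 < h → ∀ t ∈ Set.Icc (0:ℝ) T,
      killedShift h u t - u t = w (t - h) - w t := by
    intro h hh t ht
    rw [huw t ht]
    show (if h ≤ t then u (t - h) else 0) - w t = w (t - h) - w t
    congr 1
    by_cases hle : h ≤ t
    · rw [if_pos hle]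
      exact huw _ ⟨sub_nonneg.2 hle, by linarith [ht.2]⟩
    · rw [if_neg hle]
      exact (hw0 (t - h) (by linarith [not_le.1 hle])).symm
  -- integrabilities
  have hintB : ∀ h : ℝ, IntegrableOn (fun t => ‖Tv h (u' t) - u' t‖) (Set.Icc 0 T) volume :=
    fun h => (((Tv h).integrable_comp hu'int).sub hu'int).norm
  have hintC : ∀ h : ℝ,
      IntegrableOn (fun t => ‖h⁻¹ • (Tv h (u t) - u t) - G (u t)‖) (Set.Icc 0 T) volume :=
    fun h => (((((Tv h).integrable_comp huint).sub huint).smul h⁻¹).sub hGuint).norm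
  have hintA : ∀ h : ℝ,
      IntegrableOn (fun t => ‖h⁻¹ • (w (t - h) - w t) + u' t‖) (Set.Icc 0 T) volume := by
    intro h
    refine Integrable.norm (Integrable.add ?_ hu'int)
    exact (((hwcont.comp (continuous_id.sub continuous_const)).sub hwcont).const_smul
      h⁻¹).integrableOn_Icc
  -- part B
  have P1 : Tendsto (fun h : ℝ => ∫ t in Set.Icc (0:ℝ) T, ‖Tv h (u' t) - u' t‖)
      (nhdsWithin 0 (Set.Ioi 0)) (nhds 0) := by
    have := tendsto_integral_filter_of_dominated_convergence
      (μ := volume.restrict (Set.Icc (0:ℝ) T)) (l := nhdsWithin (0:ℝ) (Set.Ioi 0))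
      (F := fun h t => ‖Tv h (u' t) - u' t‖) (f := fun _ => (0:ℝ))
      (fun t => 2 * ‖u' t‖) ?_ ?_ ?_ ?_
    · simpa using this
    · filter_upwards with h
      exact (((Tv h).continuous.comp_aestronglyMeasurable hu'int.1).sub hu'int.1).norm
    · filter_upwards with h
      filter_upwards with t
      rw [Real.norm_of_nonneg (norm_nonneg _)]
      calc ‖Tv h (u' t) - u' t‖ ≤ ‖Tv h (u' t)‖ + ‖u' t‖ := norm_sub_le _ _
        _ ≤ ‖u' t‖ + ‖u' t‖ := add_le_add_left (hTvcontr h _) _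
        _ = 2 * ‖u' t‖ := by ring
    · exact hu'int.norm.const_mul 2
    · filter_upwards with t
      have h1 : Tendsto (fun h : ℝ => Tv h (u' t)) (nhds 0) (nhds (Tv 0 (u' t))) :=
        (hTvcont (u' t)).tendsto 0
      rw [hTv0] at h1
      simp only [ContinuousLinearMap.coe_id', id_eq] at h1
      have h2 := (h1.sub (tendsto_const_nhds (x := u' t))).norm
      rw [sub_self, norm_zero] at h2
      exact h2.mono_left nhdsWithin_le_nhds
  -- part C
  have P2 : Tendsto (fun h : ℝ => ∫ t in Set.Icc (0:ℝ) T, ‖h⁻¹ • (Tv h (u t) - u t) - G (u t)‖)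
      (nhdsWithin 0 (Set.Ioi 0)) (nhds 0) := by
    have := tendsto_integral_filter_of_dominated_convergence
      (μ := volume.restrict (Set.Icc (0:ℝ) T)) (l := nhdsWithin (0:ℝ) (Set.Ioi 0))
      (F := fun h t => ‖h⁻¹ • (Tv h (u t) - u t) - G (u t)‖) (f := fun _ => (0:ℝ))
      (fun t => 2 * ‖G (u t)‖) ?_ ?_ ?_ ?_
    · simpa using this
    · filter_upwards with h
      exact (((((Tv h).continuous.comp_aestronglyMeasurable huint.1).sub
        huint.1).const_smul h⁻¹).sub hGuint.1).norm
    · filter_upwards [self_mem_nhdsWithin] with h hh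
      filter_upwards with t
      have hh' : (0:ℝ) < h := hh
      rw [Real.norm_of_nonneg (norm_nonneg _)]
      have hb := Tv_norm_sub_le Tv G hTv0 hTvadd hTvcontr hTvcont (u t)
        (hgen (u t) (huB0 t)) h hh'.le
      calc ‖h⁻¹ • (Tv h (u t) - u t) - G (u t)‖
          ≤ ‖h⁻¹ • (Tv h (u t) - u t)‖ + ‖G (u t)‖ := norm_sub_le _ _
        _ ≤ ‖G (u t)‖ + ‖G (u t)‖ := by
            refine add_le_add_left ?_ _
            rw [norm_smul, Real.norm_eq_abs, abs_of_pos (inv_pos.2 hh')]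
            calc h⁻¹ * ‖Tv h (u t) - u t‖ ≤ h⁻¹ * (h * ‖G (u t)‖) :=
              mul_le_mul_of_nonneg_left hb (inv_nonneg.2 hh'.le)
              _ = ‖G (u t)‖ := by field_simp
        _ = 2 * ‖G (u t)‖ := by ring
    · exact hGuint.norm.const_mul 2
    · filter_upwards with t
      exact tendsto_iff_norm_sub_tendsto_zero.1 (hgen (u t) (huB0 t))
  -- part A
  have hφ := l1_translation_tendsto g hg
  have P3 : Tendsto (fun h : ℝ => ∫ t in Set.Icc (0:ℝ) T, ‖h⁻¹ • (w (t - h) - w t) + u' t‖)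
      (nhdsWithin 0 (Set.Ioi 0)) (nhds 0) := by
    rw [Metric.tendsto_nhds]
    intro ε hε
    obtain ⟨δ, hδpos, hδ⟩ := Metric.eventually_nhds_iff.1
      (Metric.tendsto_nhds.1 hφ (ε/2) (by linarith))
    filter_upwards [Ioo_mem_nhdsGT_of_mem (Set.left_mem_Ico.2 hδpos)] with h hh
    obtain ⟨hh0, hhδ⟩ := hh
    rw [Real.dist_eq, sub_zero, abs_of_nonneg (integral_nonneg fun t => norm_nonneg _)]
    -- product integrability
    have m1 : AEStronglyMeasurable (fun p : ℝ × ℝ => g p.1)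
        ((volume : Measure ℝ).prod (volume.restrict (Set.Ioc 0 h))) :=
      hg.1.comp_quasiMeasurePreserving Measure.quasiMeasurePreserving_fst
    have m2 : AEStronglyMeasurable (fun p : ℝ × ℝ => g (p.1 - p.2))
        ((volume : Measure ℝ).prod (volume.restrict (Set.Ioc 0 h))) :=
      hg.1.comp_quasiMeasurePreserving (qmp_sub_prod _)
    have hmeasF : AEStronglyMeasurable (fun p : ℝ × ℝ => ‖g p.1 - g (p.1 - p.2)‖)
        ((volume : Measure ℝ).prod (volume.restrict (Set.Ioc 0 h))) := (m1.sub m2).norm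
    have hFint : Integrable (fun p : ℝ × ℝ => ‖g p.1 - g (p.1 - p.2)‖)
        ((volume : Measure ℝ).prod (volume.restrict (Set.Ioc 0 h))) := by
      refine ⟨hmeasF, ?_⟩
      have p1 : (∫⁻ p : ℝ × ℝ, ↑‖g p.1‖₊
            ∂((volume : Measure ℝ).prod (volume.restrict (Set.Ioc 0 h))))
          = (∫⁻ x, ↑‖g x‖₊ ∂volume) * volume (Set.Ioc (0:ℝ) h) := by
        rw [lintegral_prod (fun p : ℝ × ℝ => (‖g p.1‖₊ : ENNReal)) m1.enorm]
        simp only [lintegral_const, Measure.restrict_apply_univ]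
        rw [lintegral_mul_const'' (f := fun x => (‖g x‖₊ : ENNReal)) _ hg.1.enorm]
      have inner : ∀ r : ℝ, (∫⁻ x, ↑‖g (x - r)‖₊ ∂(volume : Measure ℝ))
          = ∫⁻ x, ↑‖g x‖₊ ∂(volume : Measure ℝ) := fun r =>
        (measurePreserving_sub_right volume r).lintegral_comp_emb
          (MeasurableEquiv.subRight r).measurableEmbedding (fun x => ↑‖g x‖₊)
      have p2 : (∫⁻ p : ℝ × ℝ, ↑‖g (p.1 - p.2)‖₊
            ∂((volume : Measure ℝ).prod (volume.restrict (Set.Ioc 0 h))))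
          = (∫⁻ x, ↑‖g x‖₊ ∂volume) * volume (Set.Ioc (0:ℝ) h) := by
        rw [lintegral_prod_symm (fun p : ℝ × ℝ => (‖g (p.1 - p.2)‖₊ : ENNReal)) m2.enorm]
        simp only []
        calc (∫⁻ y, ∫⁻ x, ↑‖g (x - y)‖₊ ∂volume ∂(volume.restrict (Set.Ioc (0:ℝ) h)))
            = ∫⁻ _y, (∫⁻ x, ↑‖g x‖₊ ∂volume) ∂(volume.restrict (Set.Ioc (0:ℝ) h)) := by
              refine lintegral_congr fun y => inner y
          _ = (∫⁻ x, ↑‖g x‖₊ ∂volume) * volume (Set.Ioc (0:ℝ) h) := by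
              rw [lintegral_const, Measure.restrict_apply_univ]
      have key : (∫⁻ p : ℝ × ℝ, ↑‖(‖g p.1 - g (p.1 - p.2)‖ : ℝ)‖₊
            ∂((volume : Measure ℝ).prod (volume.restrict (Set.Ioc 0 h))))
          ≤ (∫⁻ x, ↑‖g x‖₊ ∂volume) * volume (Set.Ioc (0:ℝ) h)
            + (∫⁻ x, ↑‖g x‖₊ ∂volume) * volume (Set.Ioc (0:ℝ) h) := by
        calc (∫⁻ p : ℝ × ℝ, ↑‖(‖g p.1 - g (p.1 - p.2)‖ : ℝ)‖₊
              ∂((volume : Measure ℝ).prod (volume.restrict (Set.Ioc 0 h))))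
            ≤ ∫⁻ p : ℝ × ℝ, (↑‖g p.1‖₊ + ↑‖g (p.1 - p.2)‖₊)
              ∂((volume : Measure ℝ).prod (volume.restrict (Set.Ioc 0 h))) := by
              refine lintegral_mono fun p => ?_
              rw [nnnorm_norm, ← ENNReal.coe_add]
              exact ENNReal.coe_le_coe.2 (nnnorm_sub_le _ _)
          _ = (∫⁻ p : ℝ × ℝ, ↑‖g p.1‖₊
                ∂((volume : Measure ℝ).prod (volume.restrict (Set.Ioc 0 h))))
              + ∫⁻ p : ℝ × ℝ, ↑‖g (p.1 - p.2)‖₊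
                ∂((volume : Measure ℝ).prod (volume.restrict (Set.Ioc 0 h))) :=
            lintegral_add_left' m1.enorm _
          _ = _ := by rw [p1, p2]
      refine lt_of_le_of_lt key ?_
      have hfin : (∫⁻ x, ↑‖g x‖₊ ∂(volume : Measure ℝ)) * volume (Set.Ioc (0:ℝ) h) < ⊤ :=
        ENNReal.mul_lt_top hg.2 measure_Ioc_lt_top
      exact ENNReal.add_lt_top.2 ⟨hfin, hfin⟩
    have hψint : Integrable (fun t => ∫ r in Set.Ioc (0:ℝ) h, ‖g t - g (t - r)‖) volume :=
      hFint.integral_prod_left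
    have hφint : Integrable (fun r => ∫ t, ‖g t - g (t - r)‖)
        (volume.restrict (Set.Ioc (0:ℝ) h)) := hFint.integral_prod_right
    have hswap : (∫ t, ∫ r in Set.Ioc (0:ℝ) h, ‖g t - g (t - r)‖)
        = ∫ r in Set.Ioc (0:ℝ) h, ∫ t, ‖g t - g (t - r)‖ :=
      integral_integral_swap (f := fun t r => ‖g t - g (t - r)‖) hFint
    -- pointwise bound
    have hptA : ∀ t ∈ Set.Icc (0:ℝ) T, ‖h⁻¹ • (w (t - h) - w t) + u' t‖
        ≤ h⁻¹ * ∫ r in Set.Ioc (0:ℝ) h, ‖g t - g (t - r)‖ := by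
      intro t ht
      have e1 : w (t - h) - w t = -∫ s in (t - h)..t, g s := by
        have := intervalIntegral.integral_add_adjacent_intervals
          (hgi 0 (t - h)) (hgi (t - h) t)
        simp only [hwdef]
        rw [← this]
        abel
      have e2 : (∫ r in (0:ℝ)..h, g (t - r)) = ∫ s in (t - h)..t, g s := by
        rw [intervalIntegral.integral_comp_sub_left (fun s => g s) t, sub_zero]
      have e4 : h⁻¹ • (w (t - h) - w t) + u' t
          = h⁻¹ • ∫ r in (0:ℝ)..h, (g t - g (t - r)) := by
        have eint : (∫ r in (0:ℝ)..h, (g t - g (t - r)))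
            = (∫ _ in (0:ℝ)..h, (g t : B)) - ∫ r in (0:ℝ)..h, g (t - r) :=
          intervalIntegral.integral_sub intervalIntegrable_const
            ((hg.comp_sub_left t).intervalIntegrable)
        rw [eint, intervalIntegral.integral_const, sub_zero, e2, e1, ← hgu' t ht]
        rw [smul_sub, smul_smul, inv_mul_cancel₀ (ne_of_gt hh0), one_smul, smul_neg]
        abel
      calc ‖h⁻¹ • (w (t - h) - w t) + u' t‖
          = ‖h⁻¹ • ∫ r in (0:ℝ)..h, (g t - g (t - r))‖ := by rw [e4]
        _ = h⁻¹ * ‖∫ r in (0:ℝ)..h, (g t - g (t - r))‖ := by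
            rw [norm_smul, Real.norm_eq_abs, abs_of_pos (inv_pos.2 hh0)]
        _ ≤ h⁻¹ * ∫ r in (0:ℝ)..h, ‖g t - g (t - r)‖ :=
            mul_le_mul_of_nonneg_left (intervalIntegral.norm_integral_le_integral_norm hh0.le)
              (inv_nonneg.2 hh0.le)
        _ = h⁻¹ * ∫ r in Set.Ioc (0:ℝ) h, ‖g t - g (t - r)‖ := by
            rw [intervalIntegral.integral_of_le hh0.le]
    -- chain of inequalities
    have c1 : (∫ t in Set.Icc (0:ℝ) T, ‖h⁻¹ • (w (t - h) - w t) + u' t‖)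
        ≤ ∫ t in Set.Icc (0:ℝ) T, h⁻¹ * ∫ r in Set.Ioc (0:ℝ) h, ‖g t - g (t - r)‖ := by
      refine integral_mono_of_nonneg (Eventually.of_forall fun t => norm_nonneg _)
        ((hψint.const_mul h⁻¹).integrableOn) ?_
      filter_upwards [ae_restrict_mem measurableSet_Icc] with t ht
      exact hptA t ht
    have c2 : (∫ t in Set.Icc (0:ℝ) T, h⁻¹ * ∫ r in Set.Ioc (0:ℝ) h, ‖g t - g (t - r)‖)
        = h⁻¹ * ∫ t in Set.Icc (0:ℝ) T, ∫ r in Set.Ioc (0:ℝ) h, ‖g t - g (t - r)‖ :=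
      integral_const_mul h⁻¹ _
    have c3 : (∫ t in Set.Icc (0:ℝ) T, ∫ r in Set.Ioc (0:ℝ) h, ‖g t - g (t - r)‖)
        ≤ ∫ t, ∫ r in Set.Ioc (0:ℝ) h, ‖g t - g (t - r)‖ :=
      setIntegral_le_integral hψint
        (Eventually.of_forall fun t => integral_nonneg fun r => norm_nonneg _)
    have c5 : (∫ r in Set.Ioc (0:ℝ) h, ∫ t, ‖g t - g (t - r)‖) ≤ h * (ε/2) := by
      have hle : ∀ r ∈ Set.Ioc (0:ℝ) h, (∫ t, ‖g t - g (t - r)‖) ≤ ε/2 := by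
        intro r hr
        have hd : dist r 0 < δ := by
          rw [Real.dist_eq, sub_zero, abs_of_pos hr.1]
          exact lt_of_le_of_lt hr.2 hhδ
        have := hδ hd
        rw [Real.dist_eq, sub_zero] at this
        exact (lt_of_abs_lt this).le
      calc (∫ r in Set.Ioc (0:ℝ) h, ∫ t, ‖g t - g (t - r)‖)
          ≤ ∫ _ in Set.Ioc (0:ℝ) h, (ε/2 : ℝ) :=
            setIntegral_mono_on hφint
              (integrableOn_const measure_Ioc_lt_top.ne) measurableSet_Ioc hle
        _ = h * (ε/2) := by
            rw [setIntegral_const, smul_eq_mul, Real.volume_real_Ioc_of_le hh0.le, sub_zero]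
    calc (∫ t in Set.Icc (0:ℝ) T, ‖h⁻¹ • (w (t - h) - w t) + u' t‖)
        ≤ h⁻¹ * ∫ t in Set.Icc (0:ℝ) T, ∫ r in Set.Ioc (0:ℝ) h, ‖g t - g (t - r)‖ :=
          c1.trans_eq c2
      _ ≤ h⁻¹ * ∫ t, ∫ r in Set.Ioc (0:ℝ) h, ‖g t - g (t - r)‖ :=
          mul_le_mul_of_nonneg_left c3 (inv_nonneg.2 hh0.le)
      _ = h⁻¹ * ∫ r in Set.Ioc (0:ℝ) h, ∫ t, ‖g t - g (t - r)‖ := by rw [hswap]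
      _ ≤ h⁻¹ * (h * (ε/2)) := mul_le_mul_of_nonneg_left c5 (inv_nonneg.2 hh0.le)
      _ = ε/2 := by field_simp
      _ < ε := by linarith
  -- assembly
  have hupper : ∀ᶠ h in nhdsWithin (0:ℝ) (Set.Ioi 0),
      (∫ t in Set.Icc (0:ℝ) T,
          ‖h⁻¹ • (Tv h (killedShift h u t) - u t) - (-u' t + G (u t))‖)
        ≤ (∫ t in Set.Icc (0:ℝ) T, ‖h⁻¹ • (w (t - h) - w t) + u' t‖)
          + ((∫ t in Set.Icc (0:ℝ) T, ‖Tv h (u' t) - u' t‖)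
            + ∫ t in Set.Icc (0:ℝ) T, ‖h⁻¹ • (Tv h (u t) - u t) - G (u t)‖) := by
    filter_upwards [self_mem_nhdsWithin] with h hh
    have hh' : (0:ℝ) < h := hh
    have hae : ∀ᵐ t ∂(volume.restrict (Set.Icc (0:ℝ) T)),
        ‖h⁻¹ • (Tv h (killedShift h u t) - u t) - (-u' t + G (u t))‖
          ≤ ‖h⁻¹ • (w (t - h) - w t) + u' t‖ + (‖Tv h (u' t) - u' t‖
            + ‖h⁻¹ • (Tv h (u t) - u t) - G (u t)‖) := by
      filter_upwards [ae_restrict_mem measurableSet_Icc] with t ht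
      have hKt := hK h hh' t ht
      have decomp : h⁻¹ • (Tv h (killedShift h u t) - u t) - (-u' t + G (u t))
          = Tv h (h⁻¹ • (killedShift h u t - u t) + u' t)
            - (Tv h (u' t) - u' t) + (h⁻¹ • (Tv h (u t) - u t) - G (u t)) := by
        simp only [map_add, ContinuousLinearMap.map_smul, map_sub]
        module
      have b1 : ‖Tv h (h⁻¹ • (killedShift h u t - u t) + u' t)‖
          ≤ ‖h⁻¹ • (w (t - h) - w t) + u' t‖ := by
        rw [← hKt]
        exact hTvcontr h _
      calc ‖h⁻¹ • (Tv h (killedShift h u t) - u t) - (-u' t + G (u t))‖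
          = ‖Tv h (h⁻¹ • (killedShift h u t - u t) + u' t)
              - (Tv h (u' t) - u' t) + (h⁻¹ • (Tv h (u t) - u t) - G (u t))‖ := by
            rw [decomp]
        _ ≤ ‖Tv h (h⁻¹ • (killedShift h u t - u t) + u' t) - (Tv h (u' t) - u' t)‖
              + ‖h⁻¹ • (Tv h (u t) - u t) - G (u t)‖ := norm_add_le _ _
        _ ≤ ‖Tv h (h⁻¹ • (killedShift h u t - u t) + u' t)‖ + ‖Tv h (u' t) - u' t‖
              + ‖h⁻¹ • (Tv h (u t) - u t) - G (u t)‖ :=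
            add_le_add_left (norm_sub_le _ _) _
        _ ≤ _ := by linarith [b1]
    calc (∫ t in Set.Icc (0:ℝ) T,
            ‖h⁻¹ • (Tv h (killedShift h u t) - u t) - (-u' t + G (u t))‖)
        ≤ ∫ t in Set.Icc (0:ℝ) T, (‖h⁻¹ • (w (t - h) - w t) + u' t‖
            + (‖Tv h (u' t) - u' t‖ + ‖h⁻¹ • (Tv h (u t) - u t) - G (u t)‖)) :=
          integral_mono_of_nonneg (Eventually.of_forall fun t => norm_nonneg _)
            ((hintA h).add ((hintB h).add (hintC h))) hae
      _ = _ := by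
          have int23 : Integrable (fun t => ‖Tv h (u' t) - u' t‖
              + ‖h⁻¹ • (Tv h (u t) - u t) - G (u t)‖) (volume.restrict (Set.Icc (0:ℝ) T)) :=
            (hintB h).add (hintC h)
          rw [integral_add (hintA h) int23, integral_add (hintB h) (hintC h)]
  refine squeeze_zero' ?_ hupper ?_
  · filter_upwards with h
    exact integral_nonneg fun t => norm_nonneg _
  · simpa using P3.add (P1.add P2)
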